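/- Let [l,u] with l < 0 < u, λ = u/(u−l), and β = −lu/(2(u−l)). Then for all z ∈ [l,u], |σ(z) − λz − β| ≤ β; equivalently, σ(z) ∈ [λz, λz + 2β], so the DeepZ single-coordinate relaxation is sound. -/

import Mathlib

open Set

/-- Soundness of the DeepZ single-coordinate relaxation: with `λ = u/(u-l)` and
`β = -lu/(2(u-l))` over `[l,u]` with `l < 0 < u`, for every `z ∈ [l,u]` we have
`|σ(z) - λz - β| ≤ β`; equivalently `σ(z) ∈ [λz, λz + 2β]`. -/
theorem deepZ_relaxation_sound (l u : ℝ) (hl : l < 0) (hu : 0 < u) :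
    ∀ z ∈ Set.Icc l u,
      |max z 0 - (u / (u - l)) * z - (-(l * u) / (2 * (u - l)))| ≤ -(l * u) / (2 * (u - l)) ∧
      (u / (u - l)) * z ≤ max z 0 ∧
      max z 0 ≤ (u / (u - l)) * z + 2 * (-(l * u) / (2 * (u - l))) := by
  intro z hz
  obtain ⟨h1, h2⟩ := hz
  have hd : (0:ℝ) < u - l := by linarith
  have hlam : (u / (u - l)) * z = u * z / (u - l) := by ring
  have hbeta : -(l * u) / (2 * (u - l)) = (-(l * u) / 2) / (u - l) := by
    field_simp
  have lower : (u / (u - l)) * z ≤ max z 0 := by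
    rcases le_or_gt z 0 with h | h
    · rw [max_eq_right h, hlam, div_le_iff₀ hd]
      nlinarith
    · rw [max_eq_left h.le, hlam, div_le_iff₀ hd]
      nlinarith
  have upper : max z 0 ≤ (u / (u - l)) * z + 2 * (-(l * u) / (2 * (u - l))) := by
    have h2b : 2 * (-(l * u) / (2 * (u - l))) = -(l * u) / (u - l) := by
      field_simp
    rw [h2b, hlam, ← add_div]
    rcases le_or_gt z 0 with h | h
    · rw [max_eq_right h, le_div_iff₀ hd]
      nlinarith
    · rw [max_eq_left h.le, le_div_iff₀ hd]
      nlinarith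
  refine ⟨?_, lower, upper⟩
  rw [abs_le]
  constructor <;> linarith
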